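/- Let X be a Banach space over ℝ, κ an uncountable regular cardinal, and {Z_σ}_{σ<κ} a family of closed linear subspaces of X with Z_β ⊊ Z_α whenever α < β < κ and ⋂_{σ<κ} Z_σ = {0}. Let Y ⊆ X be a closed linear subspace whose density character (the least cardinality of a dense subset of Y) is strictly less than κ. Then there exists θ < κ such that Z_θ ∩ Y = {0}. -/

import Mathlib

open Set Cardinal Pointwise

/-- If `Y` is a closed subspace of density character `< κ` and `{Z_σ}_{σ<κ}` is a strictly
decreasing family of closed subspaces with trivial intersection, then some `Z_θ` meets `Y`
trivially. -/
theorem exists_inter_subspace_trivial (X : Type*) [NormedAddCommGroup X]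
    [NormedSpace ℝ X] [CompleteSpace X]
    (κ : Cardinal) (hκ : Cardinal.aleph0 < κ) (hreg : κ.IsRegular)
    (Z : {σ : Ordinal // σ < κ.ord} → Submodule ℝ X)
    (hclosed : ∀ σ, IsClosed (Z σ : Set X))
    (hnest : ∀ α β, α < β → Z β < Z α)
    (hinter : ⋂ σ, (Z σ : Set X) = {0})
    (Y : Submodule ℝ X) (hYc : IsClosed (Y : Set X))
    (hdens : ∃ D : Set X, D ⊆ Y ∧ Cardinal.mk D < κ ∧ (Y : Set X) ⊆ closure D) :
    ∃ θ, (Z θ : Set X) ∩ (Y : Set X) = {0} := by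
  classical
  by_contra hcon
  push_neg at hcon
  set W : {σ : Ordinal // σ < κ.ord} → Submodule ℝ X := fun σ => Z σ ⊓ Y with hWdef
  have hWclosed : ∀ σ, IsClosed (W σ : Set X) := fun σ => (hclosed σ).inter hYc
  have hWanti : ∀ σ τ : {σ : Ordinal // σ < κ.ord}, σ ≤ τ → W τ ≤ W σ := by
    intro σ τ h
    rcases eq_or_lt_of_le h with rfl | h
    · exact le_rfl
    · exact inf_le_inf_right _ (hnest σ τ h).le
  have hWY : ∀ σ, W σ ≤ Y := fun σ => inf_le_right
  have hne : ∀ σ : {σ : Ordinal // σ < κ.ord}, ∃ x, x ∈ W σ ∧ x ≠ 0 := by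
    intro σ
    by_contra h
    push_neg at h
    apply hcon σ
    apply Set.eq_singleton_iff_unique_mem.2
    refine ⟨⟨(Z σ).zero_mem, Y.zero_mem⟩, fun x hx => h x (Submodule.mem_inf.2 ⟨hx.1, hx.2⟩)⟩
  have hdrop : ∀ σ : {σ : Ordinal // σ < κ.ord}, ∃ τ : {σ : Ordinal // σ < κ.ord}, W τ < W σ := by
    intro σ
    obtain ⟨x, hx, hx0⟩ := hne σ
    have hZ : ∃ ρ : {σ : Ordinal // σ < κ.ord}, x ∉ Z ρ := by
      by_contra h
      push_neg at h
      have : x ∈ ⋂ ρ, (Z ρ : Set X) := mem_iInter.2 fun ρ => h ρ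
      rw [hinter] at this
      exact hx0 this
    obtain ⟨ρ, hρ⟩ := hZ
    have hσρ : σ < ρ := by
      by_contra h
      push_neg at h
      exact hρ (Submodule.mem_inf.1 (hWanti ρ σ h hx)).1
    refine ⟨ρ, lt_of_le_of_ne (hWanti σ ρ hσρ.le) ?_⟩
    intro he
    rw [← he] at hx
    exact hρ (Submodule.mem_inf.1 hx).1
  obtain ⟨D, hDY, hDcard, hDdense⟩ := hdens
  set R : Set (Submodule ℝ X) := Set.range W with hR
  have hwf : WellFoundedLT {σ : Ordinal // σ < κ.ord} := ⟨InvImage.wf Subtype.val Ordinal.lt_wf⟩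
  -- build separated points
  have key : ∀ v : R, ∃ u : X, u ∈ (v : Submodule ℝ X) ∧ u ∈ Y ∧
      ∀ v' : R, (v' : Submodule ℝ X) < v → ∀ z ∈ (v' : Submodule ℝ X), 1 ≤ ‖u - z‖ := by
    rintro ⟨v, σ₀, rfl⟩
    have hSne : {σ : {σ : Ordinal // σ < κ.ord} | W σ < W σ₀}.Nonempty := hdrop σ₀
    set τ : {σ : Ordinal // σ < κ.ord} := hwf.wf.min {σ : {σ : Ordinal // σ < κ.ord} | W σ < W σ₀} hSne with hτ
    have hτmem : W τ < W σ₀ := hwf.wf.min_mem _ hSne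
    have hτmin : ∀ σ : {σ : Ordinal // σ < κ.ord}, W σ < W σ₀ → τ ≤ σ := by
      intro σ hσ
      by_contra h
      push_neg at h
      exact hwf.wf.not_lt_min _ hσ h
    obtain ⟨x, hxv, hxF⟩ := SetLike.exists_of_lt hτmem
    have hFne : (W τ : Set X).Nonempty := ⟨0, (W τ).zero_mem⟩
    set d : ℝ := Metric.infDist x (W τ : Set X) with hd
    have hdpos : 0 < d := ((hWclosed τ).notMem_iff_infDist_pos hFne).1 hxF
    refine ⟨d⁻¹ • x, Submodule.smul_mem _ _ hxv, hWY σ₀ (Submodule.smul_mem _ _ hxv), ?_⟩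
    rintro ⟨v', σ', rfl⟩ hlt z hz
    have hle : W σ' ≤ W τ := by
      rcases eq_or_lt_of_le (hτmin σ' hlt) with he | h
      · rw [he]
      · exact hWanti τ σ' h.le
    have hdz : d • z ∈ W τ := (W τ).smul_mem d (hle hz)
    have h1 : d ≤ ‖x - d • z‖ := by
      have := Metric.infDist_le_dist_of_mem (x := x) hdz
      rwa [dist_eq_norm] at this
    calc (1 : ℝ) = d⁻¹ * d := (inv_mul_cancel₀ hdpos.ne').symm
      _ ≤ d⁻¹ * ‖x - d • z‖ := by
          exact mul_le_mul_of_nonneg_left h1 (inv_nonneg.2 hdpos.le)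
      _ = ‖d⁻¹ • (x - d • z)‖ := by
          rw [norm_smul, Real.norm_eq_abs, abs_of_pos (inv_pos.2 hdpos)]
      _ = ‖d⁻¹ • x - z‖ := by
          rw [smul_sub, smul_smul, inv_mul_cancel₀ hdpos.ne', one_smul]
  choose u hu1 hu2 hu3 using key
  have happrox : ∀ v : R, ∃ dd : D, dist (u v) (dd : X) < 1 / 2 := by
    intro v
    have : u v ∈ closure D := hDdense (hu2 v)
    rw [Metric.mem_closure_iff] at this
    obtain ⟨dd, hdd, hdd2⟩ := this (1 / 2) (by norm_num)
    exact ⟨⟨dd, hdd⟩, hdd2⟩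
  choose dd hdd using happrox
  have hinj : Function.Injective dd := by
    intro v v' he
    by_contra hne'
    have hvne : (v : Submodule ℝ X) ≠ (v' : Submodule ℝ X) := by
      intro h
      exact hne' (Subtype.ext h)
    -- comparability
    obtain ⟨σ, hσ⟩ := v.2
    obtain ⟨σ', hσ'⟩ := v'.2
    have hsep : ∀ a b : R, (a : Submodule ℝ X) < b → (1 : ℝ) ≤ dist (u b) (u a) := by
      intro a b hab
      rw [dist_eq_norm]
      exact hu3 b a hab (u a) (hu1 a)
    have hdist : (1 : ℝ) ≤ dist (u v) (u v') ∨ (1 : ℝ) ≤ dist (u v') (u v) := by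
      rcases le_total σ σ' with h | h
      · have : (v' : Submodule ℝ X) ≤ v := by rw [← hσ, ← hσ']; exact hWanti σ σ' h
        exact Or.inl (hsep v' v (lt_of_le_of_ne this (fun hh => hvne hh.symm)))
      · have : (v : Submodule ℝ X) ≤ v' := by rw [← hσ, ← hσ']; exact hWanti σ' σ h
        exact Or.inr (hsep v v' (lt_of_le_of_ne this hvne))
    have hclose : dist (u v) (u v') < 1 := by
      calc dist (u v) (u v') ≤ dist (u v) (dd v : X) + dist (dd v : X) (u v') := dist_triangle _ _ _
        _ < 1 / 2 + 1 / 2 := by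
            refine add_lt_add (hdd v) ?_
            rw [dist_comm, he]
            exact hdd v'
        _ = 1 := by norm_num
    rcases hdist with h | h
    · exact absurd hclose (not_lt.2 h)
    · rw [dist_comm] at hclose
      exact absurd hclose (not_lt.2 h)
  have hRlt : #R < κ := (Cardinal.mk_le_of_injective hinj).trans_lt hDcard
  -- choose preimages and take sup
  have hsur : ∀ v : R, ∃ σ : {σ : Ordinal // σ < κ.ord}, W σ = (v : Submodule ℝ X) := fun v => v.2
  choose g hg using hsur
  have hθlt : (⨆ v : R, ((g v : {σ : Ordinal // σ < κ.ord}) : Ordinal)) < κ.ord := by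
    exact Cardinal.iSup_lt_ord_lift_of_isRegular hreg (by rwa [Cardinal.lift_id]) fun v => (g v).2
  set Θ : {σ : Ordinal // σ < κ.ord} := ⟨⨆ v : R, ((g v : {σ : Ordinal // σ < κ.ord}) : Ordinal), hθlt⟩ with hΘ
  have hΘle : ∀ v : R, W Θ ≤ (v : Submodule ℝ X) := by
    intro v
    rw [← hg v]
    apply hWanti
    show ((g v : {σ : Ordinal // σ < κ.ord}) : Ordinal) ≤ (Θ : Ordinal)
    exact Ordinal.le_iSup (fun v : R => ((g v : {σ : Ordinal // σ < κ.ord}) : Ordinal)) v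
  obtain ⟨τ, hτ⟩ := hdrop Θ
  exact hτ.not_ge (hΘle ⟨W τ, ⟨τ, rfl⟩⟩)
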